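/- For the entropy production of the stable Gauss-Markov chain (L = I − Σₒ⁻¹ − SᵀS, U = 0, R = Σₒ⁻¹ + SᵀS − I, V = S − Sᵀ), the Hermitian symbol F_λ(θ) = (I − Sᵀe^{iθ})(I − Se^{−iθ}) + 2iλ(S − Sᵀ) sin θ satisfies F_{−λ−1}(θ) = F_λ(2π − θ) for all λ ∈ ℝ and θ ∈ [0,2π]. Consequently, f_{−λ−1} = f_λ, where f_λ := inf over θ and unit z ∈ ℂ^d of ⟨z, F_λ(θ)z⟩, and whenever f_λ > 0, φ(−λ−1) = φ(λ), where φ(λ) := −(1/4π)∫₀^{2π} ln det F_λ(θ) dθ. -/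
import Mathlib


open Matrix

/-- The Hermitian symbol of the entropy production,
`F_λ(θ) = (I − Sᵀe^{iθ})(I − Se^{−iθ}) + 2iλ(S − Sᵀ) sin θ`. -/
noncomputable def epSymbol {d : ℕ} (S : Matrix (Fin d) (Fin d) ℝ) (lam θ : ℝ) :
    Matrix (Fin d) (Fin d) ℂ :=
  (1 - Complex.exp ((θ : ℂ) * Complex.I) • (S.map (fun x => (x : ℂ)))ᵀ) *
      (1 - Complex.exp (-(θ : ℂ) * Complex.I) • (S.map (fun x => (x : ℂ)))) +
    (2 * Complex.I * (lam : ℂ) * ((Real.sin θ : ℝ) : ℂ)) •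
      ((S.map (fun x => (x : ℂ))) - (S.map (fun x => (x : ℂ)))ᵀ)

/-- `f_λ`: the infimum over `θ ∈ [0,2π]` and unit vectors `z` of
`⟨z, F_λ(θ) z⟩`. -/
noncomputable def epF {d : ℕ} (S : Matrix (Fin d) (Fin d) ℝ) (lam : ℝ) : ℝ :=
  sInf {r : ℝ | ∃ θ ∈ Set.Icc (0 : ℝ) (2 * Real.pi), ∃ z : Fin d → ℂ,
    star z ⬝ᵥ z = 1 ∧ r = (star z ⬝ᵥ (epSymbol S lam θ).mulVec z).re}

/-- `φ(λ) = −(1/4π)∫₀^{2π} ln det F_λ(θ) dθ`. -/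
noncomputable def epPhi {d : ℕ} (S : Matrix (Fin d) (Fin d) ℝ) (lam : ℝ) : ℝ :=
  -(1 / (4 * Real.pi)) *
    ∫ θ in (0 : ℝ)..(2 * Real.pi), Real.log ((epSymbol S lam θ).det.re)

lemma epSymbol_symm {d : ℕ} (S : Matrix (Fin d) (Fin d) ℝ) (lam θ : ℝ) :
    epSymbol S (-lam - 1) θ = epSymbol S lam (2 * Real.pi - θ) := by
  unfold epSymbol
  have h1 : Complex.exp ((((2 * Real.pi - θ) : ℝ) : ℂ) * Complex.I)
      = Complex.exp (-(θ:ℂ) * Complex.I) := by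
    push_cast
    rw [sub_mul, Complex.exp_sub, Complex.exp_two_pi_mul_I]
    rw [neg_mul, Complex.exp_neg, one_div]
  have h2 : Complex.exp (-(((2 * Real.pi - θ) : ℝ) : ℂ) * Complex.I)
      = Complex.exp ((θ:ℂ) * Complex.I) := by
    push_cast
    rw [neg_sub, sub_mul, Complex.exp_sub, Complex.exp_two_pi_mul_I]
    simp
  have hs : Real.sin (2 * Real.pi - θ) = -Real.sin θ := by
    rw [Real.sin_sub]; simp
  have ha : Complex.exp ((θ:ℂ) * Complex.I)
      = Complex.exp (-(θ:ℂ) * Complex.I) + 2 * Complex.I * (Real.sin θ : ℂ) := by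
    rw [Complex.exp_mul_I, Complex.exp_mul_I, Complex.ofReal_sin, Complex.sin_neg,
      Complex.cos_neg]
    ring
  rw [h1, h2, hs, ha]
  push_cast
  simp only [mul_sub, sub_mul, add_mul, mul_add, one_mul, mul_one, Matrix.smul_mul, Matrix.mul_smul,
    smul_smul, smul_sub, smul_add, add_smul, sub_smul, neg_smul, one_smul]
  module

/-- the Gallavotti–Cohen symmetry of the entropy production
symbol: `F_{−λ−1}(θ) = F_λ(2π−θ)`, hence `f_{−λ−1} = f_λ`, and
`φ(−λ−1) = φ(λ)` whenever `f_λ > 0`. -/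
theorem entropy_production_symbol_symmetry {d : ℕ}
    (S : Matrix (Fin d) (Fin d) ℝ) (hρ : spectralRadius ℝ S < 1) :
    (∀ (lam θ : ℝ), epSymbol S (-lam - 1) θ = epSymbol S lam (2 * Real.pi - θ)) ∧
    (∀ lam : ℝ, epF S (-lam - 1) = epF S lam) ∧
    (∀ lam : ℝ, 0 < epF S lam → epPhi S (-lam - 1) = epPhi S lam) := by
  refine ⟨epSymbol_symm S, ?_, ?_⟩
  · intro lam
    unfold epF
    congr 1
    ext r
    simp only [Set.mem_setOf_eq]
    constructor
    · rintro ⟨θ, hθ, z, hz, hr⟩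
      exact ⟨2 * Real.pi - θ, ⟨by linarith [hθ.2], by linarith [hθ.1]⟩, z, hz, by
        rw [← epSymbol_symm S lam θ]; exact hr⟩
    · rintro ⟨θ, hθ, z, hz, hr⟩
      refine ⟨2 * Real.pi - θ, ⟨by linarith [hθ.2], by linarith [hθ.1]⟩, z, hz, ?_⟩
      rw [epSymbol_symm S lam (2 * Real.pi - θ)]
      have : 2 * Real.pi - (2 * Real.pi - θ) = θ := by ring
      rw [this]; exact hr
  · intro lam _
    unfold epPhi
    congr 1
    calc (∫ θ in (0:ℝ)..(2*Real.pi), Real.log ((epSymbol S (-lam-1) θ).det.re))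
        = ∫ θ in (0:ℝ)..(2*Real.pi),
            (fun t => Real.log ((epSymbol S lam t).det.re)) (2*Real.pi - θ) := by
          simp only [epSymbol_symm S lam]
      _ = ∫ θ in (2*Real.pi - 2*Real.pi)..(2*Real.pi - 0),
            Real.log ((epSymbol S lam θ).det.re) := by
          exact intervalIntegral.integral_comp_sub_left
            (fun t => Real.log ((epSymbol S lam t).det.re)) (2*Real.pi)
      _ = _ := by norm_num
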